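/- Let γ: I → M be a slant curve with null normal in a 3-dimensional α-para-Kenmotsu manifold M (a normal almost paracontact metric manifold with α ≠ 0 constant and β = 0), with η(γ̇) = c constant and c² ≠ 1. Then α = ± g(N, φγ̇)/(1 − c²), and κ = αc, N = −α(ξ − cγ̇ ± φγ̇), W = (−1/(2α(1 − c²)))(ξ − cγ̇ ∓ φγ̇). In particular, if γ is a Legendre curve (c = 0), then κ = 0, N = −α(ξ ± φγ̇) and W = (−1/(2α))(ξ ∓ φγ̇). -/

import Mathlib

/-- The data, along a curve `γ : I → M`, of a 3-dimensional almost paracontact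
metric manifold `(M, φ, ξ, η, g)`: the pullback tangent bundle is trivialized
over a real vector space `V`; `g t`, `phi t`, `xi t` are the metric, the
structure tensor and the Reeb field at the point `γ t`, and `T t = γ̇(t)` is
the velocity of the curve.  The 1-form `η` is recovered as `η(v) = g v ξ`.
The axioms record: `η(ξ) = 1`, `φξ = 0`, `φ² = Id − η ⊗ ξ`,
`g(φv, φw) = −g(v,w) + η(v)η(w)`, symmetry of `g`, and that `g` has
signature `(2,1)` (an orthonormal basis with signs `(+,+,−)`). -/
structure APCMCurve (V : Type*) [AddCommGroup V] [Module ℝ V] where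
  g : ℝ → V →ₗ[ℝ] V →ₗ[ℝ] ℝ
  phi : ℝ → V →ₗ[ℝ] V
  xi : ℝ → V
  T : ℝ → V
  g_symm : ∀ t v w, g t v w = g t w v
  xi_unit : ∀ t, g t (xi t) (xi t) = 1
  phi_xi : ∀ t, phi t (xi t) = 0
  phi_sq : ∀ t v, phi t (phi t v) = v - g t v (xi t) • xi t
  compat : ∀ t v w, g t (phi t v) (phi t w) = -(g t v w) + g t v (xi t) * g t w (xi t)
  signature : ∀ t, ∃ e : Module.Basis (Fin 3) ℝ V,
    g t (e 0) (e 0) = 1 ∧ g t (e 1) (e 1) = 1 ∧ g t (e 2) (e 2) = -1 ∧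
    g t (e 0) (e 1) = 0 ∧ g t (e 0) (e 2) = 0 ∧ g t (e 1) (e 2) = 0

namespace APCMCurve

variable {V : Type*} [AddCommGroup V] [Module ℝ V]

theorem eta_phi (M : APCMCurve V) (t : ℝ) (v : V) :
    M.g t (M.phi t v) (M.xi t) = 0 := by
  have h1 : M.phi t (M.phi t (M.phi t v))
      = M.phi t v - M.g t (M.phi t v) (M.xi t) • M.xi t := M.phi_sq t (M.phi t v)
  have h2 : M.phi t (M.phi t (M.phi t v)) = M.phi t v := by
    rw [M.phi_sq t v, map_sub, map_smul, M.phi_xi]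
    simp
  have h3 : M.g t (M.phi t v) (M.xi t) • M.xi t = 0 := by
    have := h1.symm.trans h2
    linear_combination (norm := module) -this
  have h4 := congrArg (fun u => M.g t u (M.xi t)) h3
  simp only [map_smul, LinearMap.smul_apply, smul_eq_mul, map_zero,
    LinearMap.zero_apply, M.xi_unit] at h4
  linarith

theorem antisym (M : APCMCurve V) (t : ℝ) (v w : V) :
    M.g t (M.phi t v) w = - M.g t v (M.phi t w) := by
  have hw : w = M.phi t (M.phi t w) + M.g t w (M.xi t) • M.xi t := by
    rw [M.phi_sq]; abel
  calc M.g t (M.phi t v) w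
      = M.g t (M.phi t v) (M.phi t (M.phi t w))
        + M.g t w (M.xi t) * M.g t (M.phi t v) (M.xi t) := by
        conv_lhs => rw [hw]
        simp [map_add, map_smul]
    _ = - M.g t v (M.phi t w) := by
        simp only [M.compat, M.eta_phi]
        ring

theorem decomp (M : APCMCurve V) {c : ℝ} (hc : c ^ 2 ≠ 1) (t : ℝ)
    (hunit : M.g t (M.T t) (M.T t) = 1) (hslant : M.g t (M.T t) (M.xi t) = c)
    (v : V) : ∃ x y z : ℝ, v = x • M.T t + y • M.phi t (M.T t) + z • M.xi t := by
  obtain ⟨e, he0, he1, he2, he01, he02, he12⟩ := M.signature t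
  haveI : FiniteDimensional ℝ V := Module.Finite.of_basis e
  have hc' : (1 : ℝ) - c ^ 2 ≠ 0 := by
    intro h; apply hc; linarith
  have hTp : M.g t (M.T t) (M.phi t (M.T t)) = 0 := by
    have h1 := M.antisym t (M.T t) (M.T t)
    have h2 := M.g_symm t (M.phi t (M.T t)) (M.T t)
    linarith
  have hpT : M.g t (M.phi t (M.T t)) (M.T t) = 0 := by
    rw [M.g_symm]; exact hTp
  have hxT : M.g t (M.xi t) (M.T t) = c := by rw [M.g_symm]; exact hslant
  have hpp : M.g t (M.phi t (M.T t)) (M.phi t (M.T t)) = c ^ 2 - 1 := by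
    rw [M.compat, hunit, hslant]; ring
  have hpx : M.g t (M.phi t (M.T t)) (M.xi t) = 0 := M.eta_phi t (M.T t)
  have hxp : M.g t (M.xi t) (M.phi t (M.T t)) = 0 := by rw [M.g_symm]; exact hpx
  have hli : LinearIndependent ℝ ![M.T t, M.phi t (M.T t), M.xi t] := by
    rw [Fintype.linearIndependent_iff]
    intro l hl
    rw [Fin.sum_univ_three] at hl
    simp only [Matrix.cons_val_zero, Matrix.cons_val_one, Matrix.head_cons,
      Matrix.cons_val_two, Matrix.tail_cons] at hl
    have pT := congrArg (fun u => M.g t u (M.T t)) hl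
    have pp := congrArg (fun u => M.g t u (M.phi t (M.T t))) hl
    have px := congrArg (fun u => M.g t u (M.xi t)) hl
    simp only [map_add, map_smul, LinearMap.add_apply, LinearMap.smul_apply,
      smul_eq_mul, map_zero, LinearMap.zero_apply,
      hunit, hslant, hxT, hTp, hpT, hpp, hpx, hxp, M.xi_unit] at pT pp px
    have hl1 : l 1 = 0 := by
      rcases mul_eq_zero.mp (show l 1 * (c ^ 2 - 1) = 0 by linarith) with h | h
      · exact h
      · exact absurd (by linarith : c ^ 2 = 1) hc
    have hl2 : l 2 = 0 := by
      have h : l 2 * (1 - c ^ 2) = 0 := by linear_combination px - c * pT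
      rcases mul_eq_zero.mp h with h' | h'
      · exact h'
      · exact absurd h' hc'
    have hl0 : l 0 = 0 := by linear_combination pT - c * hl2
    intro i; fin_cases i <;> assumption
  have hcard : Fintype.card (Fin 3) = Module.finrank ℝ V := by
    rw [Module.finrank_eq_card_basis e]
  let B := basisOfLinearIndependentOfCardEqFinrank hli hcard
  have hBc : ⇑B = ![M.T t, M.phi t (M.T t), M.xi t] :=
    coe_basisOfLinearIndependentOfCardEqFinrank hli hcard
  have hv := B.sum_repr v
  rw [Fin.sum_univ_three] at hv
  simp only [hBc, Matrix.cons_val_zero, Matrix.cons_val_one, Matrix.head_cons,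
    Matrix.cons_val_two, Matrix.tail_cons] at hv
  exact ⟨B.repr v 0, B.repr v 1, B.repr v 2, hv.symm⟩

end APCMCurve
open APCMCurve in

/-- The data, along a curve `γ`, of a 3-dimensional *normal* almost paracontact
metric manifold: in addition to `APCMCurve`, `D` is the covariant derivative
along `γ` (induced by the Levi-Civita connection `∇` of `g`), and
`a = α ∘ γ`, `b = β ∘ γ` are the compositions with `γ` of the structure
functions `α`, `β` of the normal structure (those with
`2α = Trace{X ↦ ∇_X ξ}`, `2β = Trace{X ↦ φ∇_X ξ}`), so that along `γ` one has
`∇_{γ̇} ξ = α(γ̇ − η(γ̇)ξ) + βφγ̇` (field `D_xi`) and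
`(∇_{γ̇} φ)A = β(g(γ̇,A)ξ − η(A)γ̇) + α(g(φγ̇,A)ξ − η(A)φγ̇)` for every vector
field `A` along `γ` (field `D_phi`).  `D` is additive, satisfies the Leibniz
rule and is metric-compatible. -/
structure NAPCMCurve (V : Type*) [AddCommGroup V] [Module ℝ V]
    extends APCMCurve V where
  D : (ℝ → V) → (ℝ → V)
  a : ℝ → ℝ
  b : ℝ → ℝ
  D_add : ∀ A B : ℝ → V, D (fun t => A t + B t) = fun t => D A t + D B t
  D_smul : ∀ (f : ℝ → ℝ) (A : ℝ → V) (t : ℝ), DifferentiableAt ℝ f t →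
    D (fun s => f s • A s) t = deriv f t • A t + f t • D A t
  D_metric : ∀ (A B : ℝ → V) (t : ℝ),
    HasDerivAt (fun s => g s (A s) (B s)) (g t (D A t) (B t) + g t (A t) (D B t)) t
  D_xi : ∀ t, D xi t = a t • (T t - g t (T t) (xi t) • xi t) + b t • phi t (T t)
  D_phi : ∀ (A : ℝ → V) (t : ℝ),
    D (fun s => phi s (A s)) t
      = b t • (g t (T t) (A t) • xi t - g t (A t) (xi t) • T t)
        + a t • (g t (phi t (T t)) (A t) • xi t - g t (A t) (xi t) • phi t (T t))
        + phi t (D A t)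

/-- Let `γ` be a slant curve with null normal in a
3-dimensional α-para-Kenmotsu manifold (`α` a nonzero constant, `β = 0`),
with `η(γ̇) = c` constant, `c² ≠ 1`.  Then `α = ±g(N,φγ̇)/(1−c²)`, and
`κ = αc`, `N = −α(ξ − cγ̇ ± φγ̇)`, `W = (−1/(2α(1−c²)))(ξ − cγ̇ ∓ φγ̇)`.
In particular, if `γ` is a Legendre curve (`c = 0`), then `κ = 0`,
`N = −α(ξ ± φγ̇)` and `W = (−1/(2α))(ξ ∓ φγ̇)`. -/
theorem alpha_para_kenmotsu_null_normal_cartan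
    {V : Type*} [AddCommGroup V] [Module ℝ V]
    (M : NAPCMCurve V) (k : ℝ) (hk : k ≠ 0)
    (ha : ∀ t, M.a t = k) (hb : ∀ t, M.b t = 0)
    (c : ℝ) (hc : c ^ 2 ≠ 1)
    (hunit : ∀ t, M.g t (M.T t) (M.T t) = 1)
    (hslant : ∀ t, M.g t (M.T t) (M.xi t) = c)
    (hnongeo : ∀ t, M.D M.T t ≠ 0)
    (hnullnormal : ∀ t, M.g t (M.D M.T t) (M.D M.T t) = 0)
    (N : ℝ → V) (hN : N = M.D M.T)
    (κ : ℝ → ℝ) (hκ : ∀ t, M.D N t = κ t • N t)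
    (W : ℝ → V)
    (hW1 : ∀ t, M.g t (N t) (W t) = 1)
    (hW2 : ∀ t, M.g t (W t) (W t) = 0)
    (hW3 : ∀ t, M.g t (M.T t) (W t) = 0) :
    (∀ t : ℝ, ∃ s : ℝ, (s = 1 ∨ s = -1) ∧
      k = s * (M.g t (N t) (M.phi t (M.T t)) / (1 - c ^ 2)) ∧
      κ t = k * c ∧
      N t = (-k) • (M.xi t - c • M.T t + s • M.phi t (M.T t)) ∧
      W t = (-1 / (2 * k * (1 - c ^ 2)))
          • (M.xi t - c • M.T t - s • M.phi t (M.T t))) ∧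
    (c = 0 → ∀ t : ℝ, ∃ s : ℝ, (s = 1 ∨ s = -1) ∧
      κ t = 0 ∧
      N t = (-k) • (M.xi t + s • M.phi t (M.T t)) ∧
      W t = (-1 / (2 * k)) • (M.xi t - s • M.phi t (M.T t))) := by
  have hc' : (1 : ℝ) - c ^ 2 ≠ 0 := fun h => hc (by linarith)
  have hk2 : k * (1 - c ^ 2) ≠ 0 := mul_ne_zero hk hc'
  -- Gram matrix facts
  have hTp : ∀ t, M.g t (M.T t) (M.phi t (M.T t)) = 0 := by
    intro t
    have h1 := M.antisym t (M.T t) (M.T t)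
    have h2 := M.g_symm t (M.phi t (M.T t)) (M.T t)
    linarith
  have hpT : ∀ t, M.g t (M.phi t (M.T t)) (M.T t) = 0 := by
    intro t; rw [M.g_symm]; exact hTp t
  have hxT : ∀ t, M.g t (M.xi t) (M.T t) = c := by
    intro t; rw [M.g_symm]; exact hslant t
  have hpp : ∀ t, M.g t (M.phi t (M.T t)) (M.phi t (M.T t)) = c ^ 2 - 1 := by
    intro t; rw [M.compat, hunit, hslant]; ring
  have hpx : ∀ t, M.g t (M.phi t (M.T t)) (M.xi t) = 0 := fun t => M.eta_phi t (M.T t)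
  have hxp : ∀ t, M.g t (M.xi t) (M.phi t (M.T t)) = 0 := by
    intro t; rw [M.g_symm]; exact hpx t
  -- derivative facts
  have hNT : ∀ t, M.g t (N t) (M.T t) = 0 := by
    intro t
    have h1 := M.D_metric M.T M.T t
    rw [show (fun s => M.g s (M.T s) (M.T s)) = fun _ => (1 : ℝ) from funext hunit] at h1
    have h3 := h1.unique (hasDerivAt_const t 1)
    have h4 := M.g_symm t (M.T t) (M.D M.T t)
    rw [hN]; linarith
  have hNx : ∀ t, M.g t (N t) (M.xi t) = -(k * (1 - c ^ 2)) := by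
    intro t
    have h1 := M.D_metric M.T M.xi t
    rw [show (fun s => M.g s (M.T s) (M.xi s)) = fun _ => c from funext hslant] at h1
    have h3 := h1.unique (hasDerivAt_const t c)
    have h4 : M.g t (M.T t) (M.D M.xi t) = k * (1 - c ^ 2) := by
      rw [M.D_xi, ha, hb, hslant]
      simp only [zero_smul, add_zero, map_sub, map_smul, smul_eq_mul, hunit, hslant]
      ring
    rw [hN]; linarith
  have hκval : ∀ t, κ t = k * c := by
    intro t
    have h1 := M.D_metric N M.xi t
    rw [show (fun s => M.g s (N s) (M.xi s)) = fun _ => -(k * (1 - c ^ 2)) from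
      funext hNx] at h1
    have h3 := h1.unique (hasDerivAt_const t _)
    rw [hκ t] at h3
    simp only [map_smul, LinearMap.smul_apply, smul_eq_mul] at h3
    have h4 : M.g t (N t) (M.D M.xi t) = k * (0 - c * (-(k * (1 - c ^ 2)))) := by
      rw [M.D_xi, ha, hb, hslant]
      simp only [zero_smul, add_zero, map_add, map_sub, map_smul, smul_eq_mul,
        hNT, hNx]
    have h5 : (κ t - k * c) * (k * (1 - c ^ 2)) = 0 := by
      rw [hNx t] at h3
      linear_combination -h3 + h4
    rcases mul_eq_zero.mp h5 with h | h
    · linarith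
    · exact absurd h hk2
  have main : ∀ t : ℝ, ∃ s : ℝ, (s = 1 ∨ s = -1) ∧
      k = s * (M.g t (N t) (M.phi t (M.T t)) / (1 - c ^ 2)) ∧
      κ t = k * c ∧
      N t = (-k) • (M.xi t - c • M.T t + s • M.phi t (M.T t)) ∧
      W t = (-1 / (2 * k * (1 - c ^ 2)))
          • (M.xi t - c • M.T t - s • M.phi t (M.T t)) := by
    intro t
    obtain ⟨x, y, z, hNd⟩ := M.toAPCMCurve.decomp hc t (hunit t) (hslant t) (N t)
    -- pairing equations for N
    have e1 : x + z * c = 0 := by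
      have h := hNT t; rw [hNd] at h
      simp only [map_add, map_smul, LinearMap.add_apply, LinearMap.smul_apply,
        smul_eq_mul, hunit, hpT, hxT] at h
      linarith
    have e2 : x * c + z = -(k * (1 - c ^ 2)) := by
      have h := hNx t; rw [hNd] at h
      simp only [map_add, map_smul, LinearMap.add_apply, LinearMap.smul_apply,
        smul_eq_mul, hslant, hpx, M.xi_unit] at h
      linarith
    have e3 : x * x + y * y * (c ^ 2 - 1) + z * z + 2 * x * z * c = 0 := by
      have h := hnullnormal t
      rw [← hN, hNd] at h
      simp only [map_add, map_smul, LinearMap.add_apply, LinearMap.smul_apply,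
        smul_eq_mul, hunit, hslant, hxT, hTp, hpT, hpp, hpx, hxp, M.xi_unit] at h
      linarith
    have hz : z = -k := by
      have h : z * (1 - c ^ 2) = (-k) * (1 - c ^ 2) := by linear_combination e2 - c * e1
      exact mul_right_cancel₀ hc' h
    have hx : x = k * c := by linear_combination e1 - c * hz
    subst hx hz
    have hy2 : y ^ 2 = k ^ 2 := by
      have h : y ^ 2 * (1 - c ^ 2) = k ^ 2 * (1 - c ^ 2) := by linear_combination -e3
      exact mul_right_cancel₀ hc' h
    obtain ⟨s, hs, hy⟩ : ∃ s : ℝ, (s = 1 ∨ s = -1) ∧ y = -(s * k) := by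
      rcases mul_eq_zero.mp (show (y - k) * (y + k) = 0 by linear_combination hy2) with h | h
      · exact ⟨-1, Or.inr rfl, by linarith⟩
      · exact ⟨1, Or.inl rfl, by linarith⟩
    have hs2 : s ^ 2 = 1 := by rcases hs with h | h <;> rw [h] <;> norm_num
    refine ⟨s, hs, ?_, hκval t, ?_, ?_⟩
    · -- k = s * (g(N, φT)/(1-c²))
      have gNp : M.g t (N t) (M.phi t (M.T t)) = y * (c ^ 2 - 1) := by
        rw [hNd]
        simp only [map_add, map_smul, LinearMap.add_apply, LinearMap.smul_apply,
          smul_eq_mul, hTp, hpp, hxp]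
        ring
      rw [gNp, hy]
      field_simp
      linear_combination -(1 - c ^ 2) * hs2
    · rw [hNd, hy]; module
    · -- W
      obtain ⟨p, q, r, hWd⟩ := M.toAPCMCurve.decomp hc t (hunit t) (hslant t) (W t)
      have f1 : p + r * c = 0 := by
        have h := hW3 t; rw [hWd] at h
        simp only [map_add, map_smul, smul_eq_mul, hunit, hTp, hslant] at h
        linarith
      have hp : p = -(r * c) := by linarith
      subst hp
      have f2 : (-(r * c)) * (-(r * c)) + q * q * (c ^ 2 - 1) + r * r
          + 2 * (-(r * c)) * r * c = 0 := by
        have h := hW2 t; rw [hWd] at h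
        simp only [map_add, map_smul, LinearMap.add_apply, LinearMap.smul_apply,
          smul_eq_mul, hunit, hslant, hxT, hTp, hpT, hpp, hpx, hxp, M.xi_unit] at h
        linarith
      have f3 : (k * c) * (-(r * c)) + y * q * (c ^ 2 - 1) + (-k) * r
          + c * ((k * c) * r + (-k) * (-(r * c))) = 1 := by
        have h := hW1 t; rw [hNd, hWd] at h
        simp only [map_add, map_smul, LinearMap.add_apply, LinearMap.smul_apply,
          smul_eq_mul, hunit, hslant, hxT, hTp, hpT, hpp, hpx, hxp, M.xi_unit] at h
        linarith
      have hq2 : q ^ 2 = r ^ 2 := by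
        have h : q ^ 2 * (1 - c ^ 2) = r ^ 2 * (1 - c ^ 2) := by linear_combination -f2
        exact mul_right_cancel₀ hc' h
      have F : k * (1 - c ^ 2) * (s * q - r) = 1 := by
        rw [hy] at f3
        linear_combination f3
      have G : k * (1 - c ^ 2) * (q - s * r) = s := by
        linear_combination s * F - k * (1 - c ^ 2) * q * hs2
      have hqsr : q - s * r ≠ 0 := by
        intro h
        rw [h, mul_zero] at G
        rcases hs with h' | h' <;> rw [h'] at G <;> norm_num at G
      have hq : q = -(s * r) := by
        rcases mul_eq_zero.mp (show (q - s * r) * (q + s * r) = 0 by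
          linear_combination hq2 - r ^ 2 * hs2) with h | h
        · exact absurd h hqsr
        · linarith
      have hr : r = -1 / (2 * k * (1 - c ^ 2)) := by
        rw [hq] at F
        field_simp
        linear_combination -F - k * (1 - c ^ 2) * r * hs2
      rw [hWd, hq, hr]
      module
  refine ⟨main, fun hc0 t => ?_⟩
  obtain ⟨s, hs, _, hκ', hN', hW'⟩ := main t
  subst hc0
  refine ⟨s, hs, by rw [hκ']; ring, ?_, ?_⟩
  · rw [hN']; module
  · rw [hW']
    match_scalars <;> field_simp <;> ring
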